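/- Let v : ℝ^d → ℝ be differentiable, let h > 0 and C_I ≥ 0, and assume the discrete trace-inverse inequality ∫_{∂Ω} (∂v/∂n)² dσ ≤ (C_I/h) ∫_Ω ‖∇v‖² dV holds, with v², (∂v/∂n)² σ-integrable on ∂Ω and ‖∇v‖² Lebesgue-integrable on Ω. If the Nitsche coefficient satisfies γ ≥ 4 C_I, then the Nitsche bilinear form is coercive in the sense that a(v,v) ≥ (1/2) ( ∫_Ω ‖∇v‖² dV + (γ/h) ∫_{∂Ω} v² dσ ). -/

import Mathlib

open MeasureTheory Set RealInnerProductSpace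

/-- **Coercivity of the Nitsche bilinear form.**
Let `Ω ⊂ ℝ^d` be a bounded open set with boundary `∂Ω = frontier Ω`, let
`σ = μH[d-1] ⌊ ∂Ω` and let `n` be a measurable vector field (the outward unit normal).
Let `v` be differentiable, `h > 0`, `C_I ≥ 0`, and assume the discrete trace-inverse inequality
`∫_{∂Ω} (∂v/∂n)² dσ ≤ (C_I/h) ∫_Ω ‖∇v‖² dV`, with `v²`, `(∂v/∂n)²` σ-integrable and `‖∇v‖²`
integrable on `Ω`. If the Nitsche coefficient satisfies `γ ≥ 4 C_I`, then
`a(v,v) ≥ (1/2) (∫_Ω ‖∇v‖² dV + (γ/h) ∫_{∂Ω} v² dσ)`. -/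
theorem nitsche_coercivity {d : ℕ}
    (Ω : Set (EuclideanSpace ℝ (Fin d))) (hΩopen : IsOpen Ω)
    (hΩbdd : Bornology.IsBounded Ω)
    (n : EuclideanSpace ℝ (Fin d) → EuclideanSpace ℝ (Fin d)) (hn : Measurable n)
    (v : EuclideanSpace ℝ (Fin d) → ℝ) (hv : Differentiable ℝ v)
    (h C_I γ : ℝ) (hh : 0 < h) (hC : 0 ≤ C_I)
    (σ : Measure (EuclideanSpace ℝ (Fin d)))
    (hσ : σ = (μH[(d : ℝ) - 1]).restrict (frontier Ω))
    (hint1 : Integrable (fun x => (v x) ^ 2) σ)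
    (hint2 : Integrable (fun x => (⟪gradient v x, n x⟫ : ℝ) ^ 2) σ)
    (hint3 : IntegrableOn (fun x => ‖gradient v x‖ ^ 2) Ω volume)
    (htrace : (∫ x, (⟪gradient v x, n x⟫ : ℝ) ^ 2 ∂σ)
        ≤ (C_I / h) * ∫ x in Ω, ‖gradient v x‖ ^ 2)
    (hγ : γ ≥ 4 * C_I) :
    (∫ x in Ω, ⟪gradient v x, gradient v x⟫)
        + (∫ x, ((γ / h) * v x * v x - v x * ⟪gradient v x, n x⟫
            - ⟪gradient v x, n x⟫ * v x) ∂σ)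
      ≥ (1 / 2) * ((∫ x in Ω, ‖gradient v x‖ ^ 2)
          + (γ / h) * ∫ x, (v x) ^ 2 ∂σ) := by
  set g : EuclideanSpace ℝ (Fin d) → ℝ := fun x => ⟪gradient v x, n x⟫ with hg
  have hgmeas : Measurable g := by
    have h1 : Measurable (fun x => gradient v x) := by
      have := (measurable_fderiv ℝ (f := v))
      exact ((InnerProductSpace.toDual ℝ
        (EuclideanSpace ℝ (Fin d))).symm.continuous.measurable).comp this
    exact h1.inner hn
  have hvmeas : Measurable v := hv.continuous.measurable
  have hintvg : Integrable (fun x => v x * g x) σ := by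
    refine (hint1.add hint2).mono' ((hvmeas.mul hgmeas).aestronglyMeasurable) ?_
    filter_upwards with x
    have : |v x * g x| ≤ (v x) ^ 2 + (g x) ^ 2 := by
      rw [abs_mul]
      nlinarith [abs_nonneg (v x), abs_nonneg (g x), sq_abs (v x), sq_abs (g x),
        sq_nonneg (|v x| - |g x|)]
    simpa only [Real.norm_eq_abs, Pi.add_apply] using this
  have hAeq : (∫ x in Ω, (⟪gradient v x, gradient v x⟫ : ℝ))
      = ∫ x in Ω, ‖gradient v x‖ ^ 2 := by
    congr 1; ext x; rw [real_inner_self_eq_norm_sq]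
  set A : ℝ := ∫ x in Ω, ‖gradient v x‖ ^ 2 with hA
  set B : ℝ := ∫ x, (v x) ^ 2 ∂σ with hB
  set T : ℝ := ∫ x, (g x) ^ 2 ∂σ with hT
  have hBnn : 0 ≤ B := integral_nonneg fun x => sq_nonneg _
  have hTnn : 0 ≤ T := integral_nonneg fun x => sq_nonneg _
  have hAnn : 0 ≤ A := setIntegral_nonneg hΩopen.measurableSet fun x _ => sq_nonneg _
  have hsplit : (∫ x, ((γ / h) * v x * v x - v x * g x - g x * v x) ∂σ)
      = (γ / h) * B - 2 * ∫ x, v x * g x ∂σ := by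
    have : (fun x => (γ / h) * v x * v x - v x * g x - g x * v x)
        = fun x => (γ / h) * (v x) ^ 2 - 2 * (v x * g x) := by
      ext x; ring
    rw [this, integral_sub ((hint1.const_mul _)) (hintvg.const_mul _),
      integral_const_mul, integral_const_mul]
  rw [hAeq, hsplit]
  rcases eq_or_lt_of_le hC with hC0 | hC0
  · -- C_I = 0, hence T = 0, hence g = 0 a.e.
    have hT0 : T = 0 := le_antisymm (by
      have := htrace
      rw [← hC0] at this
      simpa [hT] using this) hTnn
    have hgz : ∀ᵐ x ∂σ, (g x) ^ 2 = 0 := by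
      have := (integral_eq_zero_iff_of_nonneg
        (fun x => sq_nonneg (g x)) hint2).mp hT0
      filter_upwards [this] with x hx using hx
    have hvg0 : (∫ x, v x * g x ∂σ) = 0 := by
      rw [integral_eq_zero_iff_of_nonneg] at hT0
      · refine integral_eq_zero_of_ae ?_
        filter_upwards [hgz] with x hx
        have : g x = 0 := by nlinarith [sq_nonneg (g x)]
        simp [this]
      · exact fun x => sq_nonneg _
      · exact hint2
    rw [hvg0]
    have hγ0 : 0 ≤ γ := by linarith
    have : 0 ≤ (γ / h) * B := mul_nonneg (div_nonneg hγ0 hh.le) hBnn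
    linarith
  · -- C_I > 0
    set ε : ℝ := h / (2 * C_I) with hε
    have hεpos : 0 < ε := div_pos hh (by linarith)
    have hcross : (∫ x, v x * g x ∂σ) ≤ (ε / 2) * T + (1 / (2 * ε)) * B := by
      have hpt : ∀ x, v x * g x ≤ (ε / 2) * (g x) ^ 2 + (1 / (2 * ε)) * (v x) ^ 2 := by
        intro x
        rw [← sub_nonneg]
        have hid : (ε / 2) * (g x) ^ 2 + (1 / (2 * ε)) * (v x) ^ 2 - v x * g x
            = (1 / (2 * ε)) * (ε * g x - v x) ^ 2 := by
          field_simp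
          ring
        rw [hid]
        positivity
      calc (∫ x, v x * g x ∂σ)
          ≤ ∫ x, ((ε / 2) * (g x) ^ 2 + (1 / (2 * ε)) * (v x) ^ 2) ∂σ := by
            refine integral_mono hintvg ?_ fun x => hpt x
            exact (hint2.const_mul _).add (hint1.const_mul _)
        _ = (ε / 2) * T + (1 / (2 * ε)) * B := by
            rw [integral_add (hint2.const_mul _) (hint1.const_mul _),
              integral_const_mul, integral_const_mul]
    have hTA : T ≤ (C_I / h) * A := htrace
    have hεT : (ε / 2) * T ≤ A / 4 := by
      have : (ε / 2) * T ≤ (ε / 2) * ((C_I / h) * A) := by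
        apply mul_le_mul_of_nonneg_left hTA (by positivity)
      have heq : (ε / 2) * ((C_I / h) * A) = A / 4 := by
        field_simp [hε]
        rw [hε]
        field_simp
        ring
      linarith
    have hεB : (1 / (2 * ε)) * B ≤ (γ / (4 * h)) * B := by
      apply mul_le_mul_of_nonneg_right _ hBnn
      rw [hε]
      rw [div_le_div_iff₀ (by positivity) (by positivity)]
      have : 1 * (4 * h) = 4 * h := by ring
      calc 1 * (4 * h) = 4 * h := by ring
        _ ≤ (γ / C_I) * h := by
            have : 4 ≤ γ / C_I := by
              rw [le_div_iff₀ hC0]; linarith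
            nlinarith
        _ = γ * (2 * (h / (2 * C_I))) := by field_simp
    have hrest : (γ / (4 * h)) * B = (γ / h) * B / 4 := by
      rw [div_mul_eq_mul_div, mul_comm (4:ℝ) h, ← div_div]
      ring
    linarith
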